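/- Let M > 0, μ > M + L_g‖L_p‖ and δ ≥ 0. Let x̄ ∈ C, set D := ((p+1)!(f(x̄) − f^*)/μ)^{1/(p+1)}, let y be a global minimizer over C of y ↦ f(y) + (μ/(p+1)!)‖y − x̄‖^{p+1}, and let x⁺ ∈ C satisfy the inexact optimality condition s_M(x⁺; x̄) − inf{ s_M(z; x̄) : z ∈ C, ‖z − x̄‖ ≤ D } ≤ (δ/(p+1)!)‖x⁺ − x̄‖^{p+1}. Then ‖y − x̄‖^{p+1} ≤ L_μ ‖x⁺ − x̄‖^{p+1}, where L_μ := (μ + δ + L_g‖L_p‖ − M)/(μ − (M + L_g‖L_p‖)). -/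

import Mathlib

open scoped BigOperators RealInnerProductSpace

noncomputable section

/-- The vector `(F_1(x), …, F_m(x)) ∈ ℝ^m` (with the Euclidean norm). -/
def euclMap {n m : ℕ} (F : Fin m → EuclideanSpace ℝ (Fin n) → ℝ)
    (x : EuclideanSpace ℝ (Fin n)) : EuclideanSpace ℝ (Fin m) :=
  (EuclideanSpace.equiv (Fin m) ℝ).symm fun i => F i x

/-- The vector `T_p^F(y; x)` of `p`-th order Taylor approximations of the components
`F_i` around the center `x`, evaluated at `y`. -/
def taylorMap (p : ℕ) {n m : ℕ} (F : Fin m → EuclideanSpace ℝ (Fin n) → ℝ)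
    (y x : EuclideanSpace ℝ (Fin n)) : EuclideanSpace ℝ (Fin m) :=
  (EuclideanSpace.equiv (Fin m) ℝ).symm fun i =>
    ∑ j ∈ Finset.range (p + 1),
      (1 / (Nat.factorial j : ℝ)) * iteratedFDeriv ℝ j (F i) x (fun _ => y - x)

/-- The composite objective `f(x) = g(F(x)) + h(x)`. -/
def fObj {n m : ℕ} (F : Fin m → EuclideanSpace ℝ (Fin n) → ℝ)
    (g : EuclideanSpace ℝ (Fin m) → ℝ) (h : EuclideanSpace ℝ (Fin n) → ℝ)
    (x : EuclideanSpace ℝ (Fin n)) : ℝ :=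
  g (euclMap F x) + h x

/-- The regularized higher-order Taylor model
`s_M(y; x̄) = g(T_p^F(y; x̄)) + (M/(p+1)!)‖y − x̄‖^{p+1} + h(y)`. -/
def sModel (p : ℕ) {n m : ℕ} (F : Fin m → EuclideanSpace ℝ (Fin n) → ℝ)
    (g : EuclideanSpace ℝ (Fin m) → ℝ) (h : EuclideanSpace ℝ (Fin n) → ℝ) (M : ℝ)
    (y xb : EuclideanSpace ℝ (Fin n)) : ℝ :=
  g (taylorMap p F y xb) + M / (Nat.factorial (p + 1) : ℝ) * ‖y - xb‖ ^ (p + 1) + h y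

section Aux

open Finset

variable {E : Type*} [NormedAddCommGroup E] [NormedSpace ℝ E]

-- step helper: iterated deriv of (fderiv applied at v)
lemma iter_clm_apply (q : ℕ) (G : E → ℝ) (hG : ContDiff ℝ (q+1) G) (v : E)
    (j : ℕ) (hj : j ≤ q) (x : E) (Mv : Fin j → E) :
    iteratedFDeriv ℝ j (fun z => fderiv ℝ G z v) x Mv
      = iteratedFDeriv ℝ (j+1) G x (Fin.snoc Mv v) := by
  have hd : ContDiff ℝ q (fderiv ℝ G) := hG.fderiv_right (by exact_mod_cast le_refl _)
  have hdj : ContDiff ℝ j (fderiv ℝ G) := hd.of_le (by exact_mod_cast hj)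
  have h1 : (fun z => fderiv ℝ G z v)
      = (ContinuousLinearMap.apply ℝ ℝ v) ∘ (fderiv ℝ G) := rfl
  rw [h1, ContinuousLinearMap.iteratedFDeriv_comp_left _ (hdj.contDiffAt (x := x)) (le_refl _)]
  rw [iteratedFDeriv_succ_apply_right]
  simp [Fin.init_snoc, Fin.snoc_last]

lemma norm_iter_zero_sub (G : E → ℝ) (a b : E) :
    ‖iteratedFDeriv ℝ 0 G a - iteratedFDeriv ℝ 0 G b‖ = ‖G a - G b‖ := by
  have h0 : iteratedFDeriv ℝ 0 G a - iteratedFDeriv ℝ 0 G b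
      = (continuousMultilinearCurryFin0 ℝ E ℝ).symm (G a - G b) := by
    ext m; simp
  rw [h0, LinearIsometryEquiv.norm_map]

lemma taylor_lip (q : ℕ) : ∀ (G : E → ℝ), ContDiff ℝ q G → ∀ K : ℝ, 0 ≤ K →
    (∀ a b, ‖iteratedFDeriv ℝ q G a - iteratedFDeriv ℝ q G b‖ ≤ K * ‖a - b‖) →
    ∀ x v : E, |G (x + v) - ∑ j ∈ Finset.range (q + 1),
        (1 / (Nat.factorial j : ℝ)) * iteratedFDeriv ℝ j G x (fun _ => v)|
      ≤ K * ‖v‖ ^ (q + 1) / (Nat.factorial (q + 1) : ℝ) := by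
  induction q with
  | zero =>
    intro G hG K hK0 hK x v
    have h0 := hK (x + v) x
    rw [norm_iter_zero_sub, add_sub_cancel_left] at h0
    simpa [Real.norm_eq_abs] using h0
  | succ q IH =>
    intro G hG K hK0 hK x v
    -- the function Gv
    set Gv : E → ℝ := fun z => fderiv ℝ G z v with hGv
    have hd : ContDiff ℝ q (fderiv ℝ G) := hG.fderiv_right (by exact_mod_cast le_refl _)
    have hGvd : ContDiff ℝ q Gv := hd.clm_apply contDiff_const
    -- Lipschitz bound for q-th derivative of Gv
    have hKnn : 0 ≤ K * ‖v‖ := mul_nonneg hK0 (norm_nonneg _)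
    have hKv : ∀ a b, ‖iteratedFDeriv ℝ q Gv a - iteratedFDeriv ℝ q Gv b‖
        ≤ (K * ‖v‖) * ‖a - b‖ := by
      intro a b
      refine ContinuousMultilinearMap.opNorm_le_bound
        (mul_nonneg hKnn (norm_nonneg _)) fun Mv => ?_
      rw [ContinuousMultilinearMap.sub_apply]
      rw [iter_clm_apply q G hG v q le_rfl a Mv, iter_clm_apply q G hG v q le_rfl b Mv]
      have h2 : iteratedFDeriv ℝ (q+1) G a (Fin.snoc Mv v)
            - iteratedFDeriv ℝ (q+1) G b (Fin.snoc Mv v)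
          = (iteratedFDeriv ℝ (q+1) G a - iteratedFDeriv ℝ (q+1) G b) (Fin.snoc Mv v) := by
        simp
      rw [h2]
      have h3 : (∏ i, ‖(Fin.snoc Mv v : Fin (q+1) → E) i‖ : ℝ) = (∏ i, ‖Mv i‖) * ‖v‖ := by
        rw [Fin.prod_univ_castSucc]
        simp
      calc ‖(iteratedFDeriv ℝ (q+1) G a - iteratedFDeriv ℝ (q+1) G b) (Fin.snoc Mv v)‖
          ≤ ‖iteratedFDeriv ℝ (q+1) G a - iteratedFDeriv ℝ (q+1) G b‖
            * ∏ i, ‖(Fin.snoc Mv v : Fin (q+1) → E) i‖ :=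
            ContinuousMultilinearMap.le_opNorm _ _
        _ = ‖iteratedFDeriv ℝ (q+1) G a - iteratedFDeriv ℝ (q+1) G b‖
            * ((∏ i, ‖Mv i‖) * ‖v‖) := by rw [h3]
        _ ≤ (K * ‖a - b‖) * ((∏ i, ‖Mv i‖) * ‖v‖) :=
            mul_le_mul_of_nonneg_right (hK a b) (by positivity)
        _ = (K * ‖v‖) * ‖a - b‖ * ∏ i, ‖Mv i‖ := by ring
    -- notation
    set c : ℕ → ℝ := fun j => iteratedFDeriv ℝ j G x (fun _ => v) with hc
    set P : ℝ → ℝ := fun t => ∑ j ∈ Finset.range (q+2),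
      t^j * ((1/(Nat.factorial j : ℝ)) * c j) with hPdef
    set φ : ℝ → ℝ := fun t => G (x + t • v) - P t with hφdef
    -- snoc of constant tuple is constant
    have hsnoc : ∀ j : ℕ, (Fin.snoc (fun _ : Fin j => v) v : Fin (j+1) → E) = fun _ => v := by
      intro j; funext i
      induction i using Fin.lastCases <;> simp
    -- iterated derivatives of Gv in terms of those of G
    have hcGv : ∀ j ≤ q, ∀ t : ℝ,
        iteratedFDeriv ℝ j Gv x (fun _ => t • v) = t^j * c (j+1) := by
      intro j hj t
      have h1 : (fun _ : Fin j => t • v) = fun i : Fin j => t • (fun _ : Fin j => v) i := rfl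
      rw [h1, ContinuousMultilinearMap.map_smul_univ]
      rw [iter_clm_apply q G hG v j hj x (fun _ => v), hsnoc j]
      simp [hc, smul_eq_mul]
    -- derivative of t ↦ G (x + t • v)
    have hcomp : ∀ t : ℝ, HasDerivAt (fun s : ℝ => G (x + s • v)) (Gv (x + t • v)) t := by
      intro t
      have hsm : HasDerivAt (fun s : ℝ => x + s • v) v t := by
        simpa using ((hasDerivAt_id t).smul_const v).const_add x
      have hdG : DifferentiableAt ℝ G (x + t • v) :=
        (hG.differentiable (by simp)).differentiableAt
      exact hdG.hasFDerivAt.comp_hasDerivAt t hsm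
    -- derivative of P
    have hPd : ∀ t : ℝ, HasDerivAt P
        (∑ j ∈ Finset.range (q+1), t^j * ((1/(Nat.factorial j : ℝ)) * c (j+1))) t := by
      intro t
      have h1 : HasDerivAt P (∑ j ∈ Finset.range (q+2),
          ((j:ℝ) * t^(j-1)) * ((1/(Nat.factorial j : ℝ)) * c j)) t :=
        HasDerivAt.fun_sum fun j _ => (hasDerivAt_pow j t).mul_const _
      convert h1 using 1
      conv_rhs => rw [Finset.sum_range_succ']
      have h0 : ((0:ℕ):ℝ) * t ^ (0 - 1) * ((1 / (Nat.factorial 0 : ℝ)) * c 0) = 0 := by simp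
      rw [h0, add_zero]
      refine Finset.sum_congr rfl fun j _ => ?_
      have hfac : (Nat.factorial (j+1) : ℝ) = ((j:ℝ)+1) * (Nat.factorial j : ℝ) := by
        push_cast [Nat.factorial_succ]; ring
      have hne : (Nat.factorial j : ℝ) ≠ 0 := by exact_mod_cast Nat.factorial_ne_zero j
      have hne1 : ((j:ℝ)+1) ≠ 0 := by positivity
      rw [Nat.add_sub_cancel]
      push_cast
      rw [hfac]
      field_simp
    -- the derivative of φ
    set φ' : ℝ → ℝ := fun t => Gv (x + t • v)
      - ∑ j ∈ Finset.range (q+1), t^j * ((1/(Nat.factorial j : ℝ)) * c (j+1)) with hφ'def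
    have hφd : ∀ t : ℝ, HasDerivAt φ (φ' t) t := fun t => (hcomp t).sub (hPd t)
    -- bound on φ' from IH
    have hbound : ∀ t : ℝ, |φ' t| ≤ (K * ‖v‖^(q+2)) * |t|^(q+1) / (Nat.factorial (q+1) : ℝ) := by
      intro t
      have hIH := IH Gv hGvd (K * ‖v‖) hKnn hKv x (t • v)
      have hsum : ∀ j ∈ Finset.range (q+1),
          (1/(Nat.factorial j : ℝ)) * iteratedFDeriv ℝ j Gv x (fun _ => t • v)
            = t^j * ((1/(Nat.factorial j : ℝ)) * c (j+1)) := by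
        intro j hj
        rw [hcGv j (Nat.lt_succ_iff.mp (Finset.mem_range.mp hj)) t]
        ring
      rw [Finset.sum_congr rfl hsum] at hIH
      have hnrm : ‖t • v‖^(q+1) = |t|^(q+1) * ‖v‖^(q+1) := by
        rw [norm_smul, Real.norm_eq_abs, mul_pow]
      rw [hnrm] at hIH
      calc |φ' t| ≤ (K * ‖v‖) * (|t|^(q+1) * ‖v‖^(q+1)) / (Nat.factorial (q+1) : ℝ) := hIH
        _ = (K * ‖v‖^(q+2)) * |t|^(q+1) / (Nat.factorial (q+1) : ℝ) := by ring
    -- fencing function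
    set B : ℝ → ℝ := fun t => (K * ‖v‖^(q+2)) * t^(q+2) / (Nat.factorial (q+2) : ℝ) with hBdef
    set B' : ℝ → ℝ := fun t =>
      (K * ‖v‖^(q+2)) * (((q:ℝ)+2) * t^(q+1)) / (Nat.factorial (q+2) : ℝ) with hB'def
    have hBd : ∀ t : ℝ, HasDerivAt B (B' t) t := by
      intro t
      have h4 := ((hasDerivAt_pow (q+2) t).const_mul (K * ‖v‖^(q+2))).div_const
        ((Nat.factorial (q+2) : ℝ))
      refine h4.congr_deriv ?_
      simp only [hB'def, show q + 2 - 1 = q + 1 from rfl]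
      push_cast
      ring
    have hP0 : P 0 = G x := by
      have hP0' : P 0 = ∑ j ∈ Finset.range (q+2),
          (0:ℝ)^j * ((1/(Nat.factorial j : ℝ)) * c j) := rfl
      rw [hP0', Finset.sum_range_succ']
      simp [hc]
    have hφ0 : φ 0 = 0 := by
      simp [hφdef, hP0]
    have key : ∀ t ∈ Set.Icc (0:ℝ) 1, ‖φ t‖ ≤ B t := by
      apply image_norm_le_of_norm_deriv_right_le_deriv_boundary
        (f' := φ') (B := B) (B' := B')
      · exact fun t _ => (hφd t).continuousAt.continuousWithinAt
      · exact fun t _ => (hφd t).hasDerivWithinAt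
      · simp [hφ0, hBdef]
      · exact hBd
      · intro t ht
        rw [Real.norm_eq_abs]
        refine (hbound t).trans (le_of_eq ?_)
        have ht0 : |t| = t := abs_of_nonneg ht.1
        have hfac : (Nat.factorial (q+2) : ℝ) = (q+2) * (Nat.factorial (q+1) : ℝ) := by
          exact_mod_cast Nat.factorial_succ (q+1)
        have hne : (Nat.factorial (q+1) : ℝ) ≠ 0 := by
          exact_mod_cast Nat.factorial_ne_zero (q+1)
        rw [hB'def]
        push_cast
        rw [ht0, hfac]
        field_simp
    have hkey1 := key 1 (Set.mem_Icc.mpr ⟨zero_le_one, le_refl 1⟩)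
    have hP1 : P 1 = ∑ j ∈ Finset.range (q+2), (1/(Nat.factorial j : ℝ)) * c j := by
      have hP1' : P 1 = ∑ j ∈ Finset.range (q+2),
          (1:ℝ)^j * ((1/(Nat.factorial j : ℝ)) * c j) := rfl
      rw [hP1']
      simp
    have hB1 : B 1 = K * ‖v‖^(q+2) / (Nat.factorial (q+2) : ℝ) := by
      simp [hBdef]
    rw [hB1] at hkey1
    have hφ1 : φ 1 = G (x + v) - ∑ j ∈ Finset.range (q+2), (1/(Nat.factorial j : ℝ)) * c j := by
      have : φ 1 = G (x + (1:ℝ) • v) - P 1 := rfl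
      rw [this, one_smul, hP1]
    rw [hφ1, Real.norm_eq_abs] at hkey1
    simpa [hc] using hkey1


end Aux

/-- the proximal point `y` of the true objective stays within a
controlled distance of the inexact RHOTA step `xp`:
`‖y − x̄‖^{p+1} ≤ L_μ ‖x⁺ − x̄‖^{p+1}`. -/
theorem stmt3 {n m : ℕ} (hn : 1 ≤ n) (hm : 1 ≤ m) (p : ℕ) (hp : 1 ≤ p)
    (F : Fin m → EuclideanSpace ℝ (Fin n) → ℝ)
    (Lp : EuclideanSpace ℝ (Fin m))
    (hFd : ∀ i, ContDiff ℝ p (F i))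
    (hFlip : ∀ i (x y : EuclideanSpace ℝ (Fin n)),
      ‖iteratedFDeriv ℝ p (F i) x - iteratedFDeriv ℝ p (F i) y‖ ≤ Lp i * ‖x - y‖)
    (g : EuclideanSpace ℝ (Fin m) → ℝ) (Lg : ℝ)
    (hgconv : ConvexOn ℝ Set.univ g)
    (hglip : ∀ a b : EuclideanSpace ℝ (Fin m), |g a - g b| ≤ Lg * ‖a - b‖)
    (C : Set (EuclideanSpace ℝ (Fin n))) (hCne : C.Nonempty) (hCcl : IsClosed C)
    (hCcv : Convex ℝ C)
    (h : EuclideanSpace ℝ (Fin n) → ℝ) (hhconv : ConvexOn ℝ Set.univ h)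
    (hhlsc : LowerSemicontinuous h)
    (fstar : ℝ) (hlb : ∀ x ∈ C, fstar ≤ fObj F g h x)
    (M μ δ : ℝ) (hM : 0 < M) (hμ : M + Lg * ‖Lp‖ < μ) (hδ : 0 ≤ δ)
    (xb : EuclideanSpace ℝ (Fin n)) (hxb : xb ∈ C)
    (D : ℝ) (hD : D = ((Nat.factorial (p + 1) : ℝ) * (fObj F g h xb - fstar) / μ) ^
      ((1 : ℝ) / (p + 1)))
    (y : EuclideanSpace ℝ (Fin n)) (hyC : y ∈ C)
    (hy : ∀ z ∈ C,
      fObj F g h y + μ / (Nat.factorial (p + 1) : ℝ) * ‖y - xb‖ ^ (p + 1) ≤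
      fObj F g h z + μ / (Nat.factorial (p + 1) : ℝ) * ‖z - xb‖ ^ (p + 1))
    (xp : EuclideanSpace ℝ (Fin n)) (hxp : xp ∈ C)
    (hinx : sModel p F g h M xp xb -
        sInf ((fun z => sModel p F g h M z xb) '' {z | z ∈ C ∧ ‖z - xb‖ ≤ D}) ≤
      δ / (Nat.factorial (p + 1) : ℝ) * ‖xp - xb‖ ^ (p + 1))
    (Lμ : ℝ) (hLμ : Lμ = (μ + δ + Lg * ‖Lp‖ - M) / (μ - (M + Lg * ‖Lp‖))) :
    ‖y - xb‖ ^ (p + 1) ≤ Lμ * ‖xp - xb‖ ^ (p + 1) := by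
  have hk : (0:ℝ) < (Nat.factorial (p + 1) : ℝ) := by
    exact_mod_cast Nat.factorial_pos (p + 1)
  set k : ℝ := (Nat.factorial (p + 1) : ℝ) with hkdef
  -- nonnegativity of constants
  have hLgnn : 0 ≤ Lg := by
    have h1 := hglip (EuclideanSpace.single (⟨0, hm⟩ : Fin m) (1:ℝ)) 0
    rw [sub_zero, EuclideanSpace.norm_single] at h1
    simpa using (abs_nonneg _).trans h1
  have hLpnn : ∀ i, 0 ≤ Lp i := by
    intro i
    have h1 := hFlip i (EuclideanSpace.single (⟨0, hn⟩ : Fin n) (1:ℝ)) 0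
    rw [sub_zero, EuclideanSpace.norm_single] at h1
    simpa using (norm_nonneg _).trans h1
  have hℓnn : 0 ≤ Lg * ‖Lp‖ := mul_nonneg hLgnn (norm_nonneg _)
  have hμpos : 0 < μ := by linarith
  -- the uniform Taylor remainder estimate
  have hrem : ∀ z : EuclideanSpace ℝ (Fin n),
      |g (euclMap F z) - g (taylorMap p F z xb)| ≤ Lg * ‖Lp‖ * ‖z - xb‖ ^ (p + 1) / k := by
    intro z
    set cz : ℝ := ‖z - xb‖ ^ (p + 1) / k with hcz
    have hcznn : 0 ≤ cz := by positivity
    have hcompb : ∀ i, ‖(euclMap F z - taylorMap p F z xb) i‖ ≤ Lp i * cz := by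
      intro i
      have h1 := taylor_lip p (F i) (hFd i) (Lp i) (hLpnn i)
        (fun a b => hFlip i a b) xb (z - xb)
      rw [add_sub_cancel] at h1
      have h2 : (euclMap F z - taylorMap p F z xb) i
          = F i z - ∑ j ∈ Finset.range (p + 1),
            (1 / (Nat.factorial j : ℝ)) * iteratedFDeriv ℝ j (F i) xb (fun _ => z - xb) := rfl
      rw [h2, Real.norm_eq_abs]
      calc |F i z - ∑ j ∈ Finset.range (p + 1),
            (1 / (Nat.factorial j : ℝ)) * iteratedFDeriv ℝ j (F i) xb (fun _ => z - xb)|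
          ≤ Lp i * ‖z - xb‖ ^ (p + 1) / k := h1
        _ = Lp i * cz := by rw [hcz]; ring
    have hvec : ‖euclMap F z - taylorMap p F z xb‖ ≤ ‖Lp‖ * cz := by
      rw [EuclideanSpace.norm_eq]
      have hsum : ∑ i, ‖(euclMap F z - taylorMap p F z xb) i‖ ^ 2
          ≤ ∑ i, (‖Lp i‖ * cz) ^ 2 := by
        refine Finset.sum_le_sum fun i _ => ?_
        have h3 : ‖(euclMap F z - taylorMap p F z xb) i‖ ≤ ‖Lp i‖ * cz := by
          refine (hcompb i).trans ?_
          have : Lp i ≤ ‖Lp i‖ := le_abs_self _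
          exact mul_le_mul_of_nonneg_right this hcznn
        exact pow_le_pow_left₀ (norm_nonneg _) h3 2
      calc Real.sqrt (∑ i, ‖(euclMap F z - taylorMap p F z xb) i‖ ^ 2)
          ≤ Real.sqrt (∑ i, (‖Lp i‖ * cz) ^ 2) := Real.sqrt_le_sqrt hsum
        _ = Real.sqrt (∑ i, ‖Lp i‖ ^ 2 * cz ^ 2) := by
            congr 1
            exact Finset.sum_congr rfl fun i _ => by ring
        _ = Real.sqrt ((∑ i, ‖Lp i‖ ^ 2) * cz ^ 2) := by rw [← Finset.sum_mul]
        _ = Real.sqrt (∑ i, ‖Lp i‖ ^ 2) * cz := by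
            rw [Real.sqrt_mul (by positivity), Real.sqrt_sq hcznn]
        _ = ‖Lp‖ * cz := by rw [← EuclideanSpace.norm_eq]
    calc |g (euclMap F z) - g (taylorMap p F z xb)|
        ≤ Lg * ‖euclMap F z - taylorMap p F z xb‖ := hglip _ _
      _ ≤ Lg * (‖Lp‖ * cz) := mul_le_mul_of_nonneg_left hvec hLgnn
      _ = Lg * ‖Lp‖ * ‖z - xb‖ ^ (p + 1) / k := by rw [hcz]; ring
  -- f(xb) ≥ fstar
  have hfxb : fstar ≤ fObj F g h xb := hlb xb hxb
  -- ‖y - xb‖ ≤ D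
  have hyA : ‖y - xb‖ ^ (p + 1) ≤ k * (fObj F g h xb - fstar) / μ := by
    have h1 := hy xb hxb
    rw [sub_self, norm_zero, zero_pow (Nat.succ_ne_zero p), mul_zero, add_zero] at h1
    have h2 : fstar ≤ fObj F g h y := hlb y hyC
    rw [le_div_iff₀ hμpos]
    have h3 : μ / k * ‖y - xb‖ ^ (p + 1) ≤ fObj F g h xb - fstar := by linarith
    have h4 := mul_le_mul_of_nonneg_left h3 hk.le
    calc ‖y - xb‖ ^ (p + 1) * μ = k * (μ / k * ‖y - xb‖ ^ (p + 1)) := by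
          field_simp
      _ ≤ k * (fObj F g h xb - fstar) := h4
  have hyD : ‖y - xb‖ ≤ D := by
    have hA0 : (0:ℝ) ≤ ‖y - xb‖ ^ (p + 1) := by positivity
    have heq : ‖y - xb‖ = (‖y - xb‖ ^ (p + 1)) ^ ((1:ℝ) / (p + 1)) := by
      rw [← Real.rpow_natCast (‖y - xb‖) (p + 1), ← Real.rpow_mul (norm_nonneg _)]
      rw [show ((p + 1 : ℕ) : ℝ) * ((1:ℝ) / (p + 1)) = 1 by
        push_cast; field_simp]
      rw [Real.rpow_one]
    rw [heq, hD]
    exact Real.rpow_le_rpow hA0 hyA (by positivity)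
  have hD0 : 0 ≤ D := le_trans (norm_nonneg _) hyD
  -- the sInf
  set S := (fun z => sModel p F g h M z xb) '' {z | z ∈ C ∧ ‖z - xb‖ ≤ D} with hS
  have hymem : sModel p F g h M y xb ∈ S := ⟨y, ⟨hyC, hyD⟩, rfl⟩
  have hbdd : BddBelow S := by
    refine ⟨fstar - Lg * ‖Lp‖ * D ^ (p + 1) / k, ?_⟩
    rintro w ⟨z, ⟨hzC, hzD⟩, rfl⟩
    have h1 : g (euclMap F z) - g (taylorMap p F z xb)
        ≤ Lg * ‖Lp‖ * ‖z - xb‖ ^ (p + 1) / k := le_of_abs_le (hrem z)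
    have h2 : fstar ≤ g (euclMap F z) + h z := hlb z hzC
    have h3 : Lg * ‖Lp‖ * ‖z - xb‖ ^ (p + 1) / k ≤ Lg * ‖Lp‖ * D ^ (p + 1) / k := by
      have := pow_le_pow_left₀ (norm_nonneg _) hzD (p + 1)
      have h4 : Lg * ‖Lp‖ * ‖z - xb‖ ^ (p+1) ≤ Lg * ‖Lp‖ * D ^ (p+1) :=
        mul_le_mul_of_nonneg_left this hℓnn
      exact (div_le_div_iff_of_pos_right hk).mpr h4
    have h5 : 0 ≤ M / k * ‖z - xb‖ ^ (p + 1) := by positivity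
    have hs : sModel p F g h M z xb = g (taylorMap p F z xb)
        + M / k * ‖z - xb‖ ^ (p + 1) + h z := rfl
    show _ ≤ sModel p F g h M z xb
    rw [hs]
    linarith
  have hsInf : sInf S ≤ sModel p F g h M y xb := csInf_le hbdd hymem
  -- main chain
  set A : ℝ := ‖y - xb‖ ^ (p + 1) with hA
  set B : ℝ := ‖xp - xb‖ ^ (p + 1) with hB
  have h1 := hy xp hxp
  have h2 : fObj F g h xp ≤ sModel p F g h M xp xb + Lg * ‖Lp‖ * B / k - M / k * B := by
    have ha : g (euclMap F xp) - g (taylorMap p F xp xb) ≤ Lg * ‖Lp‖ * B / k :=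
      le_of_abs_le (hrem xp)
    have hfo : fObj F g h xp = g (euclMap F xp) + h xp := rfl
    have hs : sModel p F g h M xp xb = g (taylorMap p F xp xb) + M / k * B + h xp := rfl
    rw [hfo, hs]
    linarith
  have h3 : sModel p F g h M xp xb ≤ sModel p F g h M y xb + δ / k * B := by
    linarith
  have h4 : sModel p F g h M y xb ≤ fObj F g h y + M / k * A + Lg * ‖Lp‖ * A / k := by
    have ha : g (taylorMap p F y xb) - g (euclMap F y) ≤ Lg * ‖Lp‖ * A / k := by
      have := le_of_abs_le (abs_sub_comm (g (euclMap F y)) (g (taylorMap p F y xb)) ▸ hrem y)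
      exact this
    have hfo : fObj F g h y = g (euclMap F y) + h y := rfl
    have hs : sModel p F g h M y xb = g (taylorMap p F y xb) + M / k * A + h y := rfl
    rw [hfo, hs]
    linarith
  have hmain : μ * A / k ≤ ((M + Lg * ‖Lp‖) * A + (μ + δ + Lg * ‖Lp‖ - M) * B) / k := by
    have e1 : μ / k * A = μ * A / k := by ring
    have e2 : μ / k * B = μ * B / k := by ring
    rw [e1, e2] at h1
    have e3 : ((M + Lg * ‖Lp‖) * A + (μ + δ + Lg * ‖Lp‖ - M) * B) / k
        = M / k * A + Lg * ‖Lp‖ * A / k + μ * B / k + δ / k * B + Lg * ‖Lp‖ * B / k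
          - M / k * B := by ring
    rw [e3]
    linarith
  have hmain2 : μ * A ≤ (M + Lg * ‖Lp‖) * A + (μ + δ + Lg * ‖Lp‖ - M) * B :=
    (div_le_div_iff_of_pos_right hk).mp hmain
  have hden : 0 < μ - (M + Lg * ‖Lp‖) := by linarith
  rw [hLμ, div_mul_eq_mul_div, le_div_iff₀ hden]
  have hgoal : A * (μ - (M + Lg * ‖Lp‖)) ≤ (μ + δ + Lg * ‖Lp‖ - M) * B := by nlinarith [hmain2]
  exact hgoal

end
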